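/- Let q ∈ N, e ≤ r ≤ √(ln q), and g₁,…,g_q be independent standard Gaussian variables. Define b ∈ R^q by b_i = max(0, g_i − r). Then P{‖b‖ ≤ 4√q · exp(−r²/8)} ≥ 1 − exp(−2√q). -/

import Mathlib

open MeasureTheory ProbabilityTheory Real Set
open scoped ENNReal NNReal

lemma lintegral_pi_pow' (μ : Measure ℝ) [SigmaFinite μ] {f : ℝ → ℝ≥0∞} (hf : Measurable f) :
    ∀ n : ℕ, ∫⁻ x : Fin n → ℝ, ∏ i, f (x i) ∂(Measure.pi fun _ => μ)
      = (∫⁻ x, f x ∂μ) ^ n := by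
  intro n
  induction n with
  | zero => simp
  | succ n ih =>
    have h := (measurePreserving_piFinSuccAbove (fun _ : Fin (n+1) => μ) 0).symm
    have hmeas : Measurable fun x : Fin (n+1) → ℝ => ∏ i, f (x i) :=
      Finset.measurable_prod _ fun i _ => hf.comp (measurable_pi_apply i)
    rw [← h.lintegral_comp hmeas]
    have : ∀ y : ℝ × (Fin n → ℝ),
        (∏ i, f (((MeasurableEquiv.piFinSuccAbove (fun _ => ℝ) 0).symm y) i))
          = f y.1 * ∏ i : Fin n, f (y.2 i) := by
      intro y
      rw [Fin.prod_univ_succ]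
      simp [MeasurableEquiv.piFinSuccAbove_symm_apply]
    simp_rw [this]
    rw [lintegral_prod_mul (f := f) (g := fun y : Fin n → ℝ => ∏ i, f (y i)) hf.aemeasurable
      (Finset.measurable_prod _ fun i _ => hf.comp (measurable_pi_apply i)).aemeasurable, ih,
      pow_succ, mul_comm]

lemma onedim' {r : ℝ} (hr : 1 ≤ r) :
    ∫⁻ x, ENNReal.ofReal (Real.exp (max 0 (x - r) ^ 2 / 2)) ∂(gaussianReal 0 1)
      ≤ ENNReal.ofReal (Real.exp (Real.exp (-r ^ 2 / 4))) := by
  have hr0 : 0 < r := lt_of_lt_of_le one_pos hr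
  set c : ℝ := (Real.sqrt (2 * π))⁻¹ with hc
  have hc0 : 0 ≤ c := inv_nonneg.2 (Real.sqrt_nonneg _)
  have hc1 : c ≤ 1 := by
    rw [hc]
    apply inv_le_one_of_one_le₀
    rw [show (1:ℝ) = Real.sqrt 1 by simp]
    exact Real.sqrt_le_sqrt (by nlinarith [pi_gt_three])
  have hmeas : Measurable fun x : ℝ => ENNReal.ofReal (Real.exp (max 0 (x - r) ^ 2 / 2)) := by
    fun_prop
  rw [← lintegral_add_compl _ (measurableSet_Iic (a := r)), compl_Iic]
  have h1 : ∫⁻ x in Iic r, ENNReal.ofReal (Real.exp (max 0 (x - r) ^ 2 / 2))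
      ∂(gaussianReal 0 1) ≤ 1 := by
    have : ∀ x ∈ Iic r, ENNReal.ofReal (Real.exp (max 0 (x - r) ^ 2 / 2)) = 1 := by
      intro x hx
      have : max 0 (x - r) = 0 := max_eq_left (by simpa using hx)
      simp [this]
    rw [setLIntegral_congr_fun measurableSet_Iic this]
    simpa using prob_le_one (μ := gaussianReal 0 1) (s := Iic r)
  have h2 : ∫⁻ x in Ioi r, ENNReal.ofReal (Real.exp (max 0 (x - r) ^ 2 / 2))
      ∂(gaussianReal 0 1) ≤ ENNReal.ofReal (Real.exp (-r ^ 2 / 4)) := by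
    rw [gaussianReal_of_var_ne_zero 0 one_ne_zero,
      setLIntegral_withDensity_eq_setLIntegral_mul _ (measurable_gaussianPDF 0 1) hmeas
        measurableSet_Ioi]
    simp only [Pi.mul_apply]
    have heq : ∀ x ∈ Ioi r, gaussianPDF 0 1 x *
        ENNReal.ofReal (Real.exp (max 0 (x - r) ^ 2 / 2))
        = ENNReal.ofReal (c * Real.exp (r ^ 2 / 2) * Real.exp (-(r * x))) := by
      intro x hx
      have hx' : r < x := hx
      have hmax : max 0 (x - r) = x - r := max_eq_right (by linarith)
      rw [gaussianPDF, ← ENNReal.ofReal_mul (gaussianPDFReal_nonneg 0 1 x)]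
      congr 1
      rw [gaussianPDFReal, hmax]
      simp only [NNReal.coe_one, mul_one, sub_zero, hc]
      rw [mul_assoc, ← Real.exp_add, mul_assoc, ← Real.exp_add]
      congr 1
      ring
    rw [setLIntegral_congr_fun measurableSet_Ioi heq]
    have hint : IntegrableOn (fun x => c * Real.exp (r ^ 2 / 2) * Real.exp (-(r * x)))
        (Ioi r) := by
      apply Integrable.const_mul
      exact (by simpa [neg_mul] using exp_neg_integrableOn_Ioi r hr0 :
        IntegrableOn (fun x => Real.exp (-(r * x))) (Ioi r))
    rw [← ofReal_integral_eq_lintegral_ofReal hint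
      (ae_of_all _ fun x => by positivity)]
    rw [MeasureTheory.integral_const_mul]
    have hval : ∫ x in Ioi r, Real.exp (-(r * x)) = r⁻¹ * Real.exp (-(r * r)) := by
      have := integral_comp_mul_left_Ioi (fun x => Real.exp (-x)) r hr0
      simpa [smul_eq_mul, integral_exp_neg_Ioi, integral_exp_Iic] using this
    rw [hval]
    apply ENNReal.ofReal_le_ofReal
    have e1 : Real.exp (r ^ 2 / 2) * (r⁻¹ * Real.exp (-(r * r)))
        = Real.exp (-r ^ 2 / 2) / r := by
      rw [show Real.exp (r^2/2) * (r⁻¹ * Real.exp (-(r*r)))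
          = (Real.exp (r^2/2) * Real.exp (-(r*r))) / r by ring, ← Real.exp_add]
      congr 1
      ring
    rw [mul_assoc, e1]
    have e2 : Real.exp (-r ^ 2 / 2) ≤ Real.exp (-r ^ 2 / 4) := by
      apply Real.exp_le_exp.2; nlinarith
    have hd : Real.exp (-r ^ 2 / 2) / r ≤ Real.exp (-r ^ 2 / 2) :=
      div_le_self (Real.exp_nonneg _) hr
    nlinarith [Real.exp_nonneg (-r ^ 2 / 2), Real.exp_pos (-r ^ 2 / 4),
      div_nonneg (Real.exp_nonneg (-r ^ 2 / 2)) hr0.le]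
  calc _ ≤ 1 + ENNReal.ofReal (Real.exp (-r ^ 2 / 4)) := add_le_add h1 h2
    _ = ENNReal.ofReal (1 + Real.exp (-r ^ 2 / 4)) := by
        rw [ENNReal.ofReal_add zero_le_one (Real.exp_nonneg _)]; simp
    _ ≤ _ := ENNReal.ofReal_le_ofReal (by
        have := Real.add_one_le_exp (Real.exp (-r ^ 2 / 4))
        linarith)

theorem norm_truncated_gaussians_bound (q : ℕ) (r : ℝ)
    (hr : Real.exp 1 ≤ r) (hr' : r ≤ Real.sqrt (Real.log q)) :
    ENNReal.ofReal (1 - Real.exp (-2 * Real.sqrt q)) ≤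
      (Measure.pi fun _ : Fin q => gaussianReal 0 1)
        {g : Fin q → ℝ |
          Real.sqrt (∑ i, max 0 (g i - r) ^ 2) ≤ 4 * Real.sqrt q * Real.exp (-r ^ 2 / 8)} := by
  have hr1 : 1 ≤ r := le_trans (by nlinarith [Real.add_one_le_exp (1:ℝ)]) hr
  have hr0 : 0 < r := lt_of_lt_of_le one_pos hr1
  have hlog : 0 < Real.log q := by
    have h1 : (0:ℝ) < Real.sqrt (Real.log q) := lt_of_lt_of_le hr0 hr'
    exact Real.sqrt_pos.mp h1
  have hq1R : (1:ℝ) < (q:ℝ) := by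
    by_contra h
    push_neg at h
    exact absurd (Real.log_nonpos (Nat.cast_nonneg q) h) (not_le.mpr hlog)
  have hq0R : (0:ℝ) < (q:ℝ) := lt_trans one_pos hq1R
  have hrr : r ^ 2 ≤ Real.log q := by
    have h := Real.sq_sqrt hlog.le
    nlinarith [Real.sqrt_nonneg (Real.log q)]
  set μq := Measure.pi fun _ : Fin q => gaussianReal 0 1 with hμq
  have : IsProbabilityMeasure μq := by rw [hμq]; infer_instance
  set t : ℝ := 4 * Real.sqrt q * Real.exp (-r ^ 2 / 8) with ht
  have ht0 : 0 ≤ t := by positivity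
  set δ : ℝ := Real.exp (-r ^ 2 / 4) with hδ
  have hδ0 : 0 < δ := Real.exp_pos _
  set E : Set (Fin q → ℝ) :=
    {g : Fin q → ℝ | Real.sqrt (∑ i, max 0 (g i - r) ^ 2) ≤ t} with hE
  have hmeasS : Measurable fun g : Fin q → ℝ => ∑ i, max 0 (g i - r) ^ 2 := by fun_prop
  have hEmeas : MeasurableSet E := by
    exact measurableSet_le (by fun_prop) measurable_const
  -- the Laplace-transform function
  set F : (Fin q → ℝ) → ℝ≥0∞ :=
    fun g => ENNReal.ofReal (Real.exp ((∑ i, max 0 (g i - r) ^ 2) / 2)) with hF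
  have hFmeas : Measurable F := by fun_prop
  have hf1meas : Measurable fun x : ℝ =>
      ENNReal.ofReal (Real.exp (max 0 (x - r) ^ 2 / 2)) := by fun_prop
  have hFprod : ∀ g, F g = ∏ i, ENNReal.ofReal (Real.exp (max 0 (g i - r) ^ 2 / 2)) := by
    intro g
    simp only [hF]
    rw [← ENNReal.ofReal_prod_of_nonneg (fun i _ => Real.exp_nonneg _), ← Real.exp_sum,
      Finset.sum_div]
  -- integral bound
  have hint : ∫⁻ g, F g ∂μq ≤ ENNReal.ofReal (Real.exp (q * δ)) := by
    calc ∫⁻ g, F g ∂μq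
        = (∫⁻ x, ENNReal.ofReal (Real.exp (max 0 (x - r) ^ 2 / 2)) ∂(gaussianReal 0 1)) ^ q := by
          simp_rw [hFprod]
          exact lintegral_pi_pow' (gaussianReal 0 1) hf1meas q
      _ ≤ ENNReal.ofReal (Real.exp δ) ^ q := pow_le_pow_left' (onedim' hr1) q
      _ = ENNReal.ofReal (Real.exp δ ^ q) := by rw [ENNReal.ofReal_pow (Real.exp_nonneg _)]
      _ = ENNReal.ofReal (Real.exp (q * δ)) := by rw [← Real.exp_nat_mul]
  -- Markov
  have hsub : Eᶜ ⊆ {g | ENNReal.ofReal (Real.exp (t ^ 2 / 2)) ≤ F g} := by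
    intro g hg
    simp only [hE, mem_compl_iff, mem_setOf_eq, not_le] at hg
    have hS0 : (0:ℝ) ≤ ∑ i, max 0 (g i - r) ^ 2 :=
      Finset.sum_nonneg fun i _ => sq_nonneg _
    have : t ^ 2 < ∑ i, max 0 (g i - r) ^ 2 := (Real.lt_sqrt ht0).mp hg
    exact ENNReal.ofReal_le_ofReal (Real.exp_le_exp.2 (by linarith))
  have hmarkov : μq Eᶜ ≤ ENNReal.ofReal (Real.exp (q * δ - t ^ 2 / 2)) := by
    calc μq Eᶜ ≤ μq {g | ENNReal.ofReal (Real.exp (t ^ 2 / 2)) ≤ F g} := measure_mono hsub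
      _ ≤ (∫⁻ g, F g ∂μq) / ENNReal.ofReal (Real.exp (t ^ 2 / 2)) :=
          meas_ge_le_lintegral_div hFmeas.aemeasurable
            (by simp [Real.exp_pos]) ENNReal.ofReal_ne_top
      _ ≤ ENNReal.ofReal (Real.exp (q * δ)) / ENNReal.ofReal (Real.exp (t ^ 2 / 2)) :=
          ENNReal.div_le_div_right hint _
      _ = ENNReal.ofReal (Real.exp (q * δ) / Real.exp (t ^ 2 / 2)) := by
          rw [ENNReal.ofReal_div_of_pos (Real.exp_pos _)]
      _ = ENNReal.ofReal (Real.exp (q * δ - t ^ 2 / 2)) := by rw [Real.exp_sub]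
  -- arithmetic: q δ - t^2/2 ≤ -2 √q
  have htsq : t ^ 2 / 2 = 8 * q * δ := by
    rw [ht, hδ]
    have h1 : Real.exp (-r ^ 2 / 8) ^ 2 = Real.exp (-r ^ 2 / 4) := by
      rw [sq, ← Real.exp_add]
      congr 1
      ring
    rw [mul_pow, mul_pow, Real.sq_sqrt hq0R.le, h1]
    ring
  have harith : (q:ℝ) * δ - t ^ 2 / 2 ≤ -2 * Real.sqrt q := by
    rw [htsq]
    have key : 2 * Real.sqrt q ≤ 7 * q * δ := by
      have hqe : (q:ℝ) = Real.exp (Real.log q) := (Real.exp_log hq0R).symm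
      have hsqe : Real.sqrt q = Real.exp (Real.log q / 2) := by
        rw [Real.exp_half, ← hqe]
      have hδe : Real.exp (-(Real.log q) / 4) ≤ δ := by
        rw [hδ]; apply Real.exp_le_exp.2; linarith
      calc 2 * Real.sqrt q ≤ 7 * Real.exp (Real.log q / 2) := by
            rw [hsqe]; nlinarith [Real.exp_pos (Real.log q / 2)]
        _ ≤ 7 * (Real.exp (Real.log q) * Real.exp (-(Real.log q) / 4)) := by
            rw [← Real.exp_add]
            have : Real.log q / 2 ≤ Real.log q + -(Real.log q) / 4 := by linarith
            nlinarith [Real.exp_le_exp.2 this]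
        _ ≤ 7 * (q * δ) := by
            rw [← hqe]
            have := mul_le_mul_of_nonneg_left hδe hq0R.le
            nlinarith
        _ = 7 * q * δ := by ring
    nlinarith
  have hcompl : μq Eᶜ ≤ ENNReal.ofReal (Real.exp (-2 * Real.sqrt q)) :=
    le_trans hmarkov (ENNReal.ofReal_le_ofReal (Real.exp_le_exp.2 harith))
  -- conclude
  have h1le : (1:ℝ≥0∞) ≤ μq E + ENNReal.ofReal (Real.exp (-2 * Real.sqrt q)) := by
    rw [← measure_univ (μ := μq), ← measure_add_measure_compl hEmeas]
    exact add_le_add_right hcompl _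
  calc ENNReal.ofReal (1 - Real.exp (-2 * Real.sqrt q))
      = 1 - ENNReal.ofReal (Real.exp (-2 * Real.sqrt q)) := by
        rw [ENNReal.ofReal_sub _ (Real.exp_nonneg _)]
        simp
    _ ≤ μq E := tsub_le_iff_right.mpr h1le
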